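/- In a finite zs-POSG, the occupancy state is a sufficient statistic of the information state for evaluating any fixed joint policy: for any stage τ, any prefix of joint decision rules (a_0, …, a_{τ−1}) inducing occupancy state s_τ, and any continuation joint policy a_{τ:} = (a_τ, …, a_{ℓ−1}), the expected discounted return from stage τ equals E[ Σ_{t=τ}^{ℓ−1} γ^{t−τ} r(x_t, u_t) ] = Σ_{x ∈ X} Σ_{o ∈ O_τ} s_τ(x, o) · α^{a_{τ:}}_τ(x, o). Consequently, any two prefixes of joint decision rules inducing the same occupancy state s_τ yield the same expected continuation return under every continuation joint policy. -/
import Mathlib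


open scoped BigOperators

section ZSPOSG

/-- A finitely supported probability distribution on a finite type,
represented as a nonnegative real-valued function summing to one. -/
def IsDist {α : Type} [Fintype α] (f : α → ℝ) : Prop :=
  (∀ a, 0 ≤ f a) ∧ ∑ a, f a = 1

/-- Stage-`τ` histories of player 1: sequences `(u¹_0, z¹_1, …, u¹_{τ-1}, z¹_τ)`. -/
abbrev Hist1 (U1 Z1 : Type) (τ : ℕ) : Type := Fin τ → U1 × Z1

/-- Stage-`τ` histories of player 2. -/
abbrev Hist2 (U2 Z2 : Type) (τ : ℕ) : Type := Fin τ → U2 × Z2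

/-- Stage-`τ` joint histories. -/
abbrev JHist (U1 Z1 U2 Z2 : Type) (τ : ℕ) : Type :=
  Hist1 U1 Z1 τ × Hist2 U2 Z2 τ

/-- Stage-`τ` stochastic decision rules of player 1. -/
abbrev DR1 (U1 Z1 : Type) [Fintype U1] (τ : ℕ) : Type :=
  {a : Hist1 U1 Z1 τ → U1 → ℝ // ∀ o, IsDist (a o)}

/-- Stage-`τ` stochastic decision rules of player 2. -/
abbrev DR2 (U2 Z2 : Type) [Fintype U2] (τ : ℕ) : Type :=
  {a : Hist2 U2 Z2 τ → U2 → ℝ // ∀ o, IsDist (a o)}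

variable {X U1 U2 Z1 Z2 : Type}
variable [Fintype X] [Fintype U1] [Fintype U2] [Fintype Z1] [Fintype Z2]

/-- Expected immediate reward `R(s_τ, a_τ)`. -/
noncomputable def Rstage (r : X → U1 × U2 → ℝ) (τ : ℕ)
    (s : X × JHist U1 Z1 U2 Z2 τ → ℝ) (a1 : DR1 U1 Z1 τ) (a2 : DR2 U2 Z2 τ) : ℝ :=
  ∑ xo : X × JHist U1 Z1 U2 Z2 τ, s xo *
    ∑ u : U1 × U2, a1.1 xo.2.1 u.1 * a2.1 xo.2.2 u.2 * r xo.1 u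

/-- Occupancy-state transition `T(s_τ, a_τ)`:
`T(s,a)(y,(o,u,z)) = a(u|o) ⬝ Σ_x s(x,o) p(y,z|x,u)`. -/
noncomputable def Tstage (p : X → U1 × U2 → X × (Z1 × Z2) → ℝ) (τ : ℕ)
    (s : X × JHist U1 Z1 U2 Z2 τ → ℝ) (a1 : DR1 U1 Z1 τ) (a2 : DR2 U2 Z2 τ) :
    X × JHist U1 Z1 U2 Z2 (τ + 1) → ℝ := fun yo =>
  let o1 : Hist1 U1 Z1 τ := fun i => yo.2.1 i.castSucc
  let o2 : Hist2 U2 Z2 τ := fun i => yo.2.2 i.castSucc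
  let u1 := (yo.2.1 (Fin.last τ)).1
  let z1 := (yo.2.1 (Fin.last τ)).2
  let u2 := (yo.2.2 (Fin.last τ)).1
  let z2 := (yo.2.2 (Fin.last τ)).2
  a1.1 o1 u1 * a2.1 o2 u2 * ∑ x : X, s (x, (o1, o2)) * p x (u1, u2) (yo.1, (z1, z2))

/-- Optimal value functions defined by backward induction: `vstar p r γ k τ s` is
`v*_τ(s)` when `k = ℓ - τ` stages remain; `vstar … 0 _ ≡ 0` and
`v*_τ(s) = max_{a¹} min_{a²} [R(s,a) + γ v*_{τ+1}(T(s,a))]`. -/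
noncomputable def vstar (p : X → U1 × U2 → X × (Z1 × Z2) → ℝ) (r : X → U1 × U2 → ℝ)
    (γ : ℝ) : (k : ℕ) → (τ : ℕ) → (X × JHist U1 Z1 U2 Z2 τ → ℝ) → ℝ
  | 0, _, _ => 0
  | k + 1, τ, s =>
      ⨆ a1 : DR1 U1 Z1 τ, ⨅ a2 : DR2 U2 Z2 τ,
        Rstage r τ s a1 a2 + γ * vstar p r γ k (τ + 1) (Tstage p τ s a1 a2)

/-- Player-2 marginal occupancy state `s^{m,2}_τ(o²) = Σ_x Σ_{o¹} s(x,(o¹,o²))`. -/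
noncomputable def marg2 (τ : ℕ) (s : X × JHist U1 Z1 U2 Z2 τ → ℝ)
    (o2 : Hist2 U2 Z2 τ) : ℝ :=
  ∑ x : X, ∑ o1 : Hist1 U1 Z1 τ, s (x, (o1, o2))

/-- Conditional occupancy state `s^{c,o²}_τ(x,o¹) = s(x,(o¹,o²)) / s^{m,2}_τ(o²)`. -/
noncomputable def condOcc (τ : ℕ) (s : X × JHist U1 Z1 U2 Z2 τ → ℝ)
    (o2 : Hist2 U2 Z2 τ) : X × Hist1 U1 Z1 τ → ℝ :=
  fun xo1 => s (xo1.1, (xo1.2, o2)) / marg2 τ s o2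

/-- Recomposition `c ⊙ m` of a conditional occupancy-state family `c` with a
player-2 marginal `m`: `(c ⊙ m)(x,(o¹,o²)) = c(o²)(x,o¹) ⬝ m(o²)`. -/
noncomputable def odot (τ : ℕ) (c : Hist2 U2 Z2 τ → X × Hist1 U1 Z1 τ → ℝ)
    (m : Hist2 U2 Z2 τ → ℝ) : X × JHist U1 Z1 U2 Z2 τ → ℝ :=
  fun xo => c xo.2.2 (xo.1, xo.2.1) * m xo.2.2

/-- 1-norm distance between two real-valued functions on a finite type. -/
noncomputable def dist1 {α : Type} [Fintype α] (f g : α → ℝ) : ℝ :=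
  ∑ a : α, |f a - g a|

/-- Full trajectories of length `τ`: the states `x_0,…,x_τ` together with the
per-player controls and observations `((u¹_t, z¹_{t+1}), (u²_t, z²_{t+1}))` for `t < τ`. -/
abbrev Traj (X U1 Z1 U2 Z2 : Type) (τ : ℕ) : Type :=
  (Fin (τ + 1) → X) × (Fin τ → (U1 × Z1) × (U2 × Z2))

/-- The stage-`t` joint history determined by the first `t` moves of a trajectory. -/
def histUpTo (τ : ℕ) (mv : Fin τ → (U1 × Z1) × (U2 × Z2)) (t : ℕ) (ht : t ≤ τ) :
    JHist U1 Z1 U2 Z2 t :=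
  (fun i => (mv (Fin.castLE ht i)).1, fun i => (mv (Fin.castLE ht i)).2)

/-- Probability of a trajectory under the process induced by `s0` and a joint
policy: `x_0 ∼ s0`, `u_t ∼ a_t(·|o_t)`, `(x_{t+1}, z_{t+1}) ∼ p(·|x_t, u_t)`. -/
noncomputable def trajProb (p : X → U1 × U2 → X × (Z1 × Z2) → ℝ) (s0 : X → ℝ)
    (pol1 : (t : ℕ) → DR1 U1 Z1 t) (pol2 : (t : ℕ) → DR2 U2 Z2 t)
    (τ : ℕ) (w : Traj X U1 Z1 U2 Z2 τ) : ℝ :=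
  s0 (w.1 0) * ∏ t : Fin τ,
    ((pol1 t.1).1 (histUpTo τ w.2 t.1 t.isLt.le).1 ((w.2 t).1.1) *
     (pol2 t.1).1 (histUpTo τ w.2 t.1 t.isLt.le).2 ((w.2 t).2.1) *
     p (w.1 t.castSucc) ((w.2 t).1.1, (w.2 t).2.1)
       (w.1 t.succ, ((w.2 t).1.2, (w.2 t).2.2)))

variable [DecidableEq X] [DecidableEq U1] [DecidableEq U2] [DecidableEq Z1] [DecidableEq Z2]

/-- The occupancy state induced by `(s0, a_0, …, a_{τ-1})`:
`s_τ(x,o) = Pr{x_τ = x, o_τ = o}`. -/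
noncomputable def occInduced (p : X → U1 × U2 → X × (Z1 × Z2) → ℝ) (s0 : X → ℝ)
    (pol1 : (t : ℕ) → DR1 U1 Z1 t) (pol2 : (t : ℕ) → DR2 U2 Z2 t)
    (τ : ℕ) : X × JHist U1 Z1 U2 Z2 τ → ℝ := fun xo =>
  ∑ w : Traj X U1 Z1 U2 Z2 τ,
    if w.1 (Fin.last τ) = xo.1 ∧ histUpTo τ w.2 τ le_rfl = xo.2
    then trajProb p s0 pol1 pol2 τ w else 0

/-- `α^{a_{τ:}}_τ(x,o)` defined by the backward recursion `α_ℓ ≡ 0` and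
`α_τ(x,o) = Σ_u a_τ(u|o) [r(x,u) + γ Σ_{y,z} p(y,z|x,u) α_{τ+1}(y,(o,u,z))]`;
`alphaRec … k τ` is `α_τ` when `k = ℓ - τ` stages remain. -/
noncomputable def alphaRec (p : X → U1 × U2 → X × (Z1 × Z2) → ℝ) (r : X → U1 × U2 → ℝ)
    (γ : ℝ) (pol1 : (t : ℕ) → DR1 U1 Z1 t) (pol2 : (t : ℕ) → DR2 U2 Z2 t) :
    (k : ℕ) → (τ : ℕ) → X → JHist U1 Z1 U2 Z2 τ → ℝ
  | 0, _, _, _ => 0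
  | k + 1, τ, x, o =>
      ∑ u : U1 × U2, (pol1 τ).1 o.1 u.1 * (pol2 τ).1 o.2 u.2 *
        (r x u + γ * ∑ yz : X × (Z1 × Z2), p x u yz *
          alphaRec p r γ pol1 pol2 k (τ + 1) yz.1
            (Fin.snoc o.1 (u.1, yz.2.1), Fin.snoc o.2 (u.2, yz.2.2)))

/-- Expected discounted return `E[Σ_{t=τ}^{ℓ-1} γ^{t-τ} r(x_t, u_t)]` under the
process induced by `s0` and the joint policy. -/
noncomputable def expReturnFrom (p : X → U1 × U2 → X × (Z1 × Z2) → ℝ)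
    (r : X → U1 × U2 → ℝ) (γ : ℝ) (s0 : X → ℝ)
    (pol1 : (t : ℕ) → DR1 U1 Z1 t) (pol2 : (t : ℕ) → DR2 U2 Z2 t)
    (ℓ τ : ℕ) : ℝ :=
  ∑ w : Traj X U1 Z1 U2 Z2 ℓ, trajProb p s0 pol1 pol2 ℓ w *
    ∑ t : Fin ℓ, if τ ≤ t.1
      then γ ^ (t.1 - τ) * r (w.1 t.castSucc) ((w.2 t).1.1, (w.2 t).2.1) else 0


/-! ### Auxiliary development for Statement 8 -/

/-- Extend a trajectory by one joint move and one state. -/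
def extendTraj (n : ℕ) (w : Traj X U1 Z1 U2 Z2 n)
    (m : (U1 × Z1) × (U2 × Z2)) (y : X) : Traj X U1 Z1 U2 Z2 (n + 1) :=
  (Fin.snoc w.1 y, Fin.snoc w.2 m)

/-- Length-`(n+1)` trajectories are length-`n` trajectories plus a move and a state. -/
def trajEquiv (n : ℕ) :
    Traj X U1 Z1 U2 Z2 (n + 1) ≃ Traj X U1 Z1 U2 Z2 n × ((U1 × Z1) × (U2 × Z2)) × X where
  toFun w := ((Fin.init w.1, Fin.init w.2), (w.2 (Fin.last n), w.1 (Fin.last (n + 1))))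
  invFun q := extendTraj n q.1 q.2.1 q.2.2
  left_inv w := by
    simp only [extendTraj, Fin.snoc_init_self]
  right_inv q := by
    simp only [extendTraj, Fin.init_snoc, Fin.snoc_last]

/-- Regroup move-and-state into control-and-transition target. -/
def moveEquiv : ((U1 × Z1) × (U2 × Z2)) × X ≃ (U1 × U2) × (X × (Z1 × Z2)) where
  toFun q := ((q.1.1.1, q.1.2.1), (q.2, (q.1.1.2, q.1.2.2)))
  invFun q := (((q.1.1, q.2.2.1), (q.1.2, q.2.2.2)), q.2.1)
  left_inv _ := rfl
  right_inv _ := rfl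

lemma histUpTo_snoc (n : ℕ) (mv : Fin n → (U1 × Z1) × (U2 × Z2))
    (m : (U1 × Z1) × (U2 × Z2)) (t : ℕ) (h : t ≤ n) (h' : t ≤ n + 1) :
    histUpTo (n + 1) (Fin.snoc mv m) t h' = histUpTo n mv t h := by
  have key : ∀ i : Fin t,
      (Fin.snoc mv m : Fin (n+1) → (U1 × Z1) × (U2 × Z2)) (Fin.castLE h' i) =
        mv (Fin.castLE h i) := by
    intro i
    have hc : Fin.castLE h' i = Fin.castSucc (Fin.castLE h i) := rfl
    rw [hc, Fin.snoc_castSucc]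
  unfold histUpTo
  exact congrArg₂ Prod.mk (funext fun i => by rw [key i]) (funext fun i => by rw [key i])

lemma histUpTo_snoc_all (n : ℕ) (mv : Fin n → (U1 × Z1) × (U2 × Z2))
    (m : (U1 × Z1) × (U2 × Z2)) :
    histUpTo (n + 1) (Fin.snoc mv m) (n + 1) le_rfl =
      (Fin.snoc (histUpTo n mv n le_rfl).1 m.1, Fin.snoc (histUpTo n mv n le_rfl).2 m.2) := by
  have key : ∀ i : Fin (n + 1), Fin.castLE (le_refl (n + 1)) i = i := fun i => rfl
  unfold histUpTo
  refine congrArg₂ Prod.mk (funext fun i => ?_) (funext fun i => ?_) <;>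
  · induction i using Fin.lastCases with
    | last =>
        rw [key, Fin.snoc_last, Fin.snoc_last]
    | cast j =>
        rw [key, Fin.snoc_castSucc, Fin.snoc_castSucc]
        rfl

lemma trajProb_extend (p : X → U1 × U2 → X × (Z1 × Z2) → ℝ) (s0 : X → ℝ)
    (pol1 : (t : ℕ) → DR1 U1 Z1 t) (pol2 : (t : ℕ) → DR2 U2 Z2 t) (n : ℕ)
    (w : Traj X U1 Z1 U2 Z2 n) (m : (U1 × Z1) × (U2 × Z2)) (y : X) :
    trajProb p s0 pol1 pol2 (n + 1) (extendTraj n w m y) =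
      trajProb p s0 pol1 pol2 n w *
        ((pol1 n).1 (histUpTo n w.2 n le_rfl).1 m.1.1 *
         (pol2 n).1 (histUpTo n w.2 n le_rfl).2 m.2.1 *
         p (w.1 (Fin.last n)) (m.1.1, m.2.1) (y, (m.1.2, m.2.2))) := by
  have hfac : ∀ t : Fin n,
      ((pol1 t.1).1
          (histUpTo (n+1) (Fin.snoc w.2 m) t.1 (t.isLt.le.trans (Nat.le_succ n))).1
          (((Fin.snoc w.2 m : Fin (n+1) → (U1 × Z1) × (U2 × Z2)) t.castSucc).1.1) *
       (pol2 t.1).1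
          (histUpTo (n+1) (Fin.snoc w.2 m) t.1 (t.isLt.le.trans (Nat.le_succ n))).2
          (((Fin.snoc w.2 m : Fin (n+1) → (U1 × Z1) × (U2 × Z2)) t.castSucc).2.1) *
       p ((Fin.snoc w.1 y : Fin (n+2) → X) t.castSucc.castSucc)
          ((((Fin.snoc w.2 m : Fin (n+1) → (U1 × Z1) × (U2 × Z2)) t.castSucc).1.1),
           (((Fin.snoc w.2 m : Fin (n+1) → (U1 × Z1) × (U2 × Z2)) t.castSucc).2.1))
          ((Fin.snoc w.1 y : Fin (n+2) → X) t.castSucc.succ,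
           ((((Fin.snoc w.2 m : Fin (n+1) → (U1 × Z1) × (U2 × Z2)) t.castSucc).1.2),
            (((Fin.snoc w.2 m : Fin (n+1) → (U1 × Z1) × (U2 × Z2)) t.castSucc).2.2)))) =
      ((pol1 t.1).1 (histUpTo n w.2 t.1 t.isLt.le).1 ((w.2 t).1.1) *
       (pol2 t.1).1 (histUpTo n w.2 t.1 t.isLt.le).2 ((w.2 t).2.1) *
       p (w.1 t.castSucc) ((w.2 t).1.1, (w.2 t).2.1)
         (w.1 t.succ, ((w.2 t).1.2, (w.2 t).2.2))) := by
    intro t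
    rw [Fin.succ_castSucc]
    simp only [Fin.snoc_castSucc]
    rw [histUpTo_snoc n w.2 m t.1 t.isLt.le]
  have hlast :
      ((pol1 n).1 (histUpTo (n+1) (Fin.snoc w.2 m) n (Nat.le_succ n)).1
          (((Fin.snoc w.2 m : Fin (n+1) → (U1 × Z1) × (U2 × Z2)) (Fin.last n)).1.1) *
       (pol2 n).1 (histUpTo (n+1) (Fin.snoc w.2 m) n (Nat.le_succ n)).2
          (((Fin.snoc w.2 m : Fin (n+1) → (U1 × Z1) × (U2 × Z2)) (Fin.last n)).2.1) *
       p ((Fin.snoc w.1 y : Fin (n+2) → X) (Fin.last n).castSucc)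
          ((((Fin.snoc w.2 m : Fin (n+1) → (U1 × Z1) × (U2 × Z2)) (Fin.last n)).1.1),
           (((Fin.snoc w.2 m : Fin (n+1) → (U1 × Z1) × (U2 × Z2)) (Fin.last n)).2.1))
          ((Fin.snoc w.1 y : Fin (n+2) → X) (Fin.last n).succ,
           ((((Fin.snoc w.2 m : Fin (n+1) → (U1 × Z1) × (U2 × Z2)) (Fin.last n)).1.2),
            (((Fin.snoc w.2 m : Fin (n+1) → (U1 × Z1) × (U2 × Z2)) (Fin.last n)).2.2)))) =
      ((pol1 n).1 (histUpTo n w.2 n le_rfl).1 m.1.1 *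
       (pol2 n).1 (histUpTo n w.2 n le_rfl).2 m.2.1 *
       p (w.1 (Fin.last n)) (m.1.1, m.2.1) (y, (m.1.2, m.2.2))) := by
    rw [Fin.succ_last]
    simp only [Fin.snoc_castSucc, Fin.snoc_last]
    rw [histUpTo_snoc n w.2 m n le_rfl]
  have h0 : (Fin.snoc w.1 y : Fin (n+2) → X) 0 = w.1 0 := by
    rw [show (0 : Fin (n+2)) = Fin.castSucc 0 from rfl, Fin.snoc_castSucc]
  unfold trajProb extendTraj
  rw [Fin.prod_univ_castSucc, mul_assoc (s0 (w.1 0))]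
  exact congrArg₂ (· * ·) (congrArg s0 h0)
    (congrArg₂ (· * ·) (Finset.prod_congr rfl fun t _ => hfac t) hlast)

lemma sum_traj_succ (p : X → U1 × U2 → X × (Z1 × Z2) → ℝ) (s0 : X → ℝ)
    (pol1 : (t : ℕ) → DR1 U1 Z1 t) (pol2 : (t : ℕ) → DR2 U2 Z2 t) (n : ℕ)
    (G : Traj X U1 Z1 U2 Z2 (n + 1) → ℝ) :
    ∑ w : Traj X U1 Z1 U2 Z2 (n + 1), trajProb p s0 pol1 pol2 (n + 1) w * G w =
    ∑ w : Traj X U1 Z1 U2 Z2 n, ∑ q : ((U1 × Z1) × (U2 × Z2)) × X,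
      trajProb p s0 pol1 pol2 n w *
        ((pol1 n).1 (histUpTo n w.2 n le_rfl).1 q.1.1.1 *
         (pol2 n).1 (histUpTo n w.2 n le_rfl).2 q.1.2.1 *
         p (w.1 (Fin.last n)) (q.1.1.1, q.1.2.1) (q.2, (q.1.1.2, q.1.2.2))) *
      G (extendTraj n w q.1 q.2) := by
  rw [← Equiv.sum_comp (trajEquiv n).symm
    (fun w : Traj X U1 Z1 U2 Z2 (n+1) => trajProb p s0 pol1 pol2 (n + 1) w * G w)]
  rw [Fintype.sum_prod_type]
  refine Finset.sum_congr rfl fun w _ => Finset.sum_congr rfl fun q _ => ?_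
  have he : (trajEquiv n).symm (w, q) = extendTraj n w q.1 q.2 := rfl
  rw [he, trajProb_extend, mul_assoc]

lemma sum_one_aux (p : X → U1 × U2 → X × (Z1 × Z2) → ℝ)
    (hp : ∀ x u, IsDist (p x u)) (a1 : U1 → ℝ) (a2 : U2 → ℝ)
    (h1 : ∑ u, a1 u = 1) (h2 : ∑ u, a2 u = 1) (x : X) :
    ∑ q : ((U1 × Z1) × (U2 × Z2)) × X,
      a1 q.1.1.1 * a2 q.1.2.1 * p x (q.1.1.1, q.1.2.1) (q.2, (q.1.1.2, q.1.2.2)) = 1 := by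
  rw [← Equiv.sum_comp (moveEquiv (X := X) (U1 := U1) (U2 := U2) (Z1 := Z1) (Z2 := Z2)).symm
    (fun q : ((U1 × Z1) × (U2 × Z2)) × X =>
      a1 q.1.1.1 * a2 q.1.2.1 * p x (q.1.1.1, q.1.2.1) (q.2, (q.1.1.2, q.1.2.2)))]
  have hb : ∀ v : (U1 × U2) × (X × (Z1 × Z2)),
      (fun q : ((U1 × Z1) × (U2 × Z2)) × X =>
        a1 q.1.1.1 * a2 q.1.2.1 * p x (q.1.1.1, q.1.2.1) (q.2, (q.1.1.2, q.1.2.2)))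
        (moveEquiv.symm v) = a1 v.1.1 * a2 v.1.2 * p x v.1 v.2 := fun v => rfl
  rw [Finset.sum_congr rfl fun v _ => hb v, Fintype.sum_prod_type]
  have hi : ∀ u : U1 × U2, ∑ yz : X × (Z1 × Z2), a1 u.1 * a2 u.2 * p x u yz =
      a1 u.1 * a2 u.2 := by
    intro u
    rw [← Finset.mul_sum, (hp x u).2, mul_one]
  rw [Finset.sum_congr rfl fun u _ => hi u, Fintype.sum_prod_type]
  calc ∑ u1, ∑ u2, a1 u1 * a2 u2 = ∑ u1, a1 u1 * ∑ u2, a2 u2 := by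
        exact Finset.sum_congr rfl fun u1 _ => (Finset.mul_sum _ _ _).symm
    _ = 1 := by rw [h2]; simp [h1]

lemma marg_step (p : X → U1 × U2 → X × (Z1 × Z2) → ℝ) (hp : ∀ x u, IsDist (p x u))
    (s0 : X → ℝ) (pol1 : (t : ℕ) → DR1 U1 Z1 t) (pol2 : (t : ℕ) → DR2 U2 Z2 t)
    (τ n : ℕ) (h : τ < n) (F : X → ((U1 × Z1) × (U2 × Z2)) → ℝ) :
    ∑ w : Traj X U1 Z1 U2 Z2 (n + 1), trajProb p s0 pol1 pol2 (n + 1) w *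
        F (w.1 ⟨τ, by omega⟩) (w.2 ⟨τ, by omega⟩) =
    ∑ w : Traj X U1 Z1 U2 Z2 n, trajProb p s0 pol1 pol2 n w *
        F (w.1 ⟨τ, by omega⟩) (w.2 ⟨τ, h⟩) := by
  rw [sum_traj_succ]
  refine Finset.sum_congr rfl fun w _ => ?_
  have e1 : ∀ q : ((U1 × Z1) × (U2 × Z2)) × X,
      (extendTraj n w q.1 q.2).1 ⟨τ, by omega⟩ = w.1 ⟨τ, by omega⟩ := by
    intro q
    show (Fin.snoc w.1 q.2 : Fin (n+2) → X)
        (Fin.castSucc (⟨τ, Nat.lt_succ_of_lt h⟩ : Fin (n + 1))) =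
      w.1 ⟨τ, Nat.lt_succ_of_lt h⟩
    rw [Fin.snoc_castSucc]
  have e2 : ∀ q : ((U1 × Z1) × (U2 × Z2)) × X,
      (extendTraj n w q.1 q.2).2 ⟨τ, by omega⟩ = w.2 ⟨τ, h⟩ := by
    intro q
    show (Fin.snoc w.2 q.1 : Fin (n+1) → (U1 × Z1) × (U2 × Z2))
        (Fin.castSucc (⟨τ, h⟩ : Fin n)) = w.2 ⟨τ, h⟩
    rw [Fin.snoc_castSucc]
  calc ∑ q : ((U1 × Z1) × (U2 × Z2)) × X,
        trajProb p s0 pol1 pol2 n w *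
          ((pol1 n).1 (histUpTo n w.2 n le_rfl).1 q.1.1.1 *
           (pol2 n).1 (histUpTo n w.2 n le_rfl).2 q.1.2.1 *
           p (w.1 (Fin.last n)) (q.1.1.1, q.1.2.1) (q.2, (q.1.1.2, q.1.2.2))) *
          F ((extendTraj n w q.1 q.2).1 ⟨τ, by omega⟩) ((extendTraj n w q.1 q.2).2 ⟨τ, by omega⟩)
      = (trajProb p s0 pol1 pol2 n w * F (w.1 ⟨τ, by omega⟩) (w.2 ⟨τ, h⟩)) *
          ∑ q : ((U1 × Z1) × (U2 × Z2)) × X,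
            (pol1 n).1 (histUpTo n w.2 n le_rfl).1 q.1.1.1 *
            (pol2 n).1 (histUpTo n w.2 n le_rfl).2 q.1.2.1 *
            p (w.1 (Fin.last n)) (q.1.1.1, q.1.2.1) (q.2, (q.1.1.2, q.1.2.2)) := by
        rw [Finset.mul_sum]
        refine Finset.sum_congr rfl fun q _ => ?_
        rw [e1 q, e2 q]
        ring
    _ = trajProb p s0 pol1 pol2 n w * F (w.1 ⟨τ, by omega⟩) (w.2 ⟨τ, h⟩) := by
        rw [sum_one_aux p hp _ _ ((pol1 n).2 _).2 ((pol2 n).2 _).2, mul_one]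

lemma marg_to (p : X → U1 × U2 → X × (Z1 × Z2) → ℝ) (hp : ∀ x u, IsDist (p x u))
    (s0 : X → ℝ) (pol1 : (t : ℕ) → DR1 U1 Z1 t) (pol2 : (t : ℕ) → DR2 U2 Z2 t)
    (τ : ℕ) (F : X → ((U1 × Z1) × (U2 × Z2)) → ℝ) :
    ∀ n (h : τ < n),
    ∑ w : Traj X U1 Z1 U2 Z2 n, trajProb p s0 pol1 pol2 n w *
        F (w.1 ⟨τ, by omega⟩) (w.2 ⟨τ, h⟩) =
    ∑ w : Traj X U1 Z1 U2 Z2 (τ + 1), trajProb p s0 pol1 pol2 (τ + 1) w *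
        F (w.1 ⟨τ, by omega⟩) (w.2 ⟨τ, by omega⟩) := by
  intro n
  induction n with
  | zero => omega
  | succ n ih =>
      intro h
      by_cases hn : τ < n
      · rw [marg_step p hp s0 pol1 pol2 τ n hn F, ih hn]
      · have : n = τ := by omega
        subst this
        rfl

lemma expReturn_split (p : X → U1 × U2 → X × (Z1 × Z2) → ℝ) (r : X → U1 × U2 → ℝ)
    (γ : ℝ) (s0 : X → ℝ)
    (pol1 : (t : ℕ) → DR1 U1 Z1 t) (pol2 : (t : ℕ) → DR2 U2 Z2 t)
    (ℓ τ : ℕ) (h : τ < ℓ) :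
    expReturnFrom p r γ s0 pol1 pol2 ℓ τ =
      (∑ w : Traj X U1 Z1 U2 Z2 ℓ, trajProb p s0 pol1 pol2 ℓ w *
        r (w.1 ⟨τ, by omega⟩) ((w.2 ⟨τ, h⟩).1.1, (w.2 ⟨τ, h⟩).2.1)) +
      γ * expReturnFrom p r γ s0 pol1 pol2 ℓ (τ + 1) := by
  unfold expReturnFrom
  have key : ∀ w : Traj X U1 Z1 U2 Z2 ℓ,
      (∑ t : Fin ℓ, if τ ≤ t.1
          then γ ^ (t.1 - τ) * r (w.1 t.castSucc) ((w.2 t).1.1, (w.2 t).2.1) else 0) =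
      r (w.1 (Fin.castSucc ⟨τ, h⟩)) ((w.2 ⟨τ, h⟩).1.1, (w.2 ⟨τ, h⟩).2.1) +
      γ * ∑ t : Fin ℓ, (if τ + 1 ≤ t.1
          then γ ^ (t.1 - (τ + 1)) * r (w.1 t.castSucc) ((w.2 t).1.1, (w.2 t).2.1) else 0) := by
    intro w
    have hpt : ∀ t : Fin ℓ,
        (if τ ≤ t.1 then γ ^ (t.1 - τ) * r (w.1 t.castSucc) ((w.2 t).1.1, (w.2 t).2.1) else 0) =
        (if t = ⟨τ, h⟩ then r (w.1 t.castSucc) ((w.2 t).1.1, (w.2 t).2.1) else 0) +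
        γ * (if τ + 1 ≤ t.1
          then γ ^ (t.1 - (τ + 1)) * r (w.1 t.castSucc) ((w.2 t).1.1, (w.2 t).2.1) else 0) := by
      intro t
      rcases lt_trichotomy t.1 τ with hlt | heq | hgt
      · rw [if_neg (show ¬ τ ≤ t.1 by omega),
          if_neg (show ¬ t = ⟨τ, h⟩ from fun he => by
            have hv : t.1 = τ := by rw [he]
            omega),
          if_neg (show ¬ τ + 1 ≤ t.1 by omega)]
        ring
      · have ht : t = ⟨τ, h⟩ := Fin.ext heq
        rw [if_pos (show τ ≤ t.1 by omega), if_pos ht,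
          if_neg (show ¬ τ + 1 ≤ t.1 by omega)]
        rw [show t.1 - τ = 0 by omega]
        ring
      · rw [if_pos (show τ ≤ t.1 by omega),
          if_neg (show ¬ t = ⟨τ, h⟩ from fun he => by
            have hv : t.1 = τ := by rw [he]
            omega),
          if_pos (show τ + 1 ≤ t.1 by omega)]
        rw [show t.1 - τ = (t.1 - (τ + 1)) + 1 by omega, pow_succ]
        ring
    rw [Finset.sum_congr rfl fun t _ => hpt t, Finset.sum_add_distrib, ← Finset.mul_sum,
      Finset.sum_ite_eq' Finset.univ (⟨τ, h⟩ : Fin ℓ)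
        (fun t => r (w.1 t.castSucc) ((w.2 t).1.1, (w.2 t).2.1)), if_pos (Finset.mem_univ _)]
  rw [Finset.sum_congr rfl fun w _ => by rw [key w]]
  rw [Finset.mul_sum]
  rw [← Finset.sum_add_distrib]
  refine Finset.sum_congr rfl fun w _ => ?_
  have hc : (⟨τ, h⟩ : Fin ℓ).castSucc = (⟨τ, Nat.lt_succ_of_lt h⟩ : Fin (ℓ + 1)) := rfl
  rw [hc]
  ring

lemma alpha_step (p : X → U1 × U2 → X × (Z1 × Z2) → ℝ) (r : X → U1 × U2 → ℝ)
    (γ : ℝ) (hp : ∀ x u, IsDist (p x u))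
    (pol1 : (t : ℕ) → DR1 U1 Z1 t) (pol2 : (t : ℕ) → DR2 U2 Z2 t)
    (k τ : ℕ) (x : X) (o : JHist U1 Z1 U2 Z2 τ) :
    ∑ q : ((U1 × Z1) × (U2 × Z2)) × X,
      ((pol1 τ).1 o.1 q.1.1.1 * (pol2 τ).1 o.2 q.1.2.1 *
        p x (q.1.1.1, q.1.2.1) (q.2, (q.1.1.2, q.1.2.2))) *
      (r x (q.1.1.1, q.1.2.1) + γ * alphaRec p r γ pol1 pol2 k (τ + 1) q.2
          (Fin.snoc o.1 q.1.1, Fin.snoc o.2 q.1.2)) =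
    alphaRec p r γ pol1 pol2 (k + 1) τ x o := by
  rw [← Equiv.sum_comp (moveEquiv (X := X) (U1 := U1) (U2 := U2) (Z1 := Z1) (Z2 := Z2)).symm
    (fun q : ((U1 × Z1) × (U2 × Z2)) × X =>
      ((pol1 τ).1 o.1 q.1.1.1 * (pol2 τ).1 o.2 q.1.2.1 *
        p x (q.1.1.1, q.1.2.1) (q.2, (q.1.1.2, q.1.2.2))) *
      (r x (q.1.1.1, q.1.2.1) + γ * alphaRec p r γ pol1 pol2 k (τ + 1) q.2
          (Fin.snoc o.1 q.1.1, Fin.snoc o.2 q.1.2)))]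
  have hb : ∀ v : (U1 × U2) × (X × (Z1 × Z2)),
      (fun q : ((U1 × Z1) × (U2 × Z2)) × X =>
        ((pol1 τ).1 o.1 q.1.1.1 * (pol2 τ).1 o.2 q.1.2.1 *
          p x (q.1.1.1, q.1.2.1) (q.2, (q.1.1.2, q.1.2.2))) *
        (r x (q.1.1.1, q.1.2.1) + γ * alphaRec p r γ pol1 pol2 k (τ + 1) q.2
            (Fin.snoc o.1 q.1.1, Fin.snoc o.2 q.1.2))) (moveEquiv.symm v) =
      ((pol1 τ).1 o.1 v.1.1 * (pol2 τ).1 o.2 v.1.2 * p x v.1 v.2) *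
        (r x v.1 + γ * alphaRec p r γ pol1 pol2 k (τ + 1) v.2.1
            (Fin.snoc o.1 (v.1.1, v.2.2.1), Fin.snoc o.2 (v.1.2, v.2.2.2))) := fun v => rfl
  rw [Finset.sum_congr rfl fun v _ => hb v, Fintype.sum_prod_type]
  have hu : ∀ u : U1 × U2,
      ∑ yz : X × (Z1 × Z2),
        ((pol1 τ).1 o.1 u.1 * (pol2 τ).1 o.2 u.2 * p x u yz) *
          (r x u + γ * alphaRec p r γ pol1 pol2 k (τ + 1) yz.1
              (Fin.snoc o.1 (u.1, yz.2.1), Fin.snoc o.2 (u.2, yz.2.2))) =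
      (pol1 τ).1 o.1 u.1 * (pol2 τ).1 o.2 u.2 *
        (r x u + γ * ∑ yz : X × (Z1 × Z2), p x u yz *
          alphaRec p r γ pol1 pol2 k (τ + 1) yz.1
            (Fin.snoc o.1 (u.1, yz.2.1), Fin.snoc o.2 (u.2, yz.2.2))) := by
    intro u
    set A := (pol1 τ).1 o.1 u.1 * (pol2 τ).1 o.2 u.2 with hA
    set α := fun yz : X × (Z1 × Z2) => alphaRec p r γ pol1 pol2 k (τ + 1) yz.1
        (Fin.snoc o.1 (u.1, yz.2.1), Fin.snoc o.2 (u.2, yz.2.2)) with hα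
    calc ∑ yz : X × (Z1 × Z2), (A * p x u yz) * (r x u + γ * α yz)
        = ∑ yz : X × (Z1 × Z2), (A * r x u * p x u yz + A * γ * (p x u yz * α yz)) := by
          refine Finset.sum_congr rfl fun yz _ => ?_
          ring
      _ = A * r x u * (∑ yz : X × (Z1 × Z2), p x u yz) +
            A * γ * ∑ yz : X × (Z1 × Z2), p x u yz * α yz := by
          rw [Finset.sum_add_distrib, ← Finset.mul_sum, ← Finset.mul_sum]
      _ = A * (r x u + γ * ∑ yz : X × (Z1 × Z2), p x u yz * α yz) := by
          rw [(hp x u).2]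
          ring
  rw [Finset.sum_congr rfl fun u _ => hu u]
  rfl

lemma main_claim (p : X → U1 × U2 → X × (Z1 × Z2) → ℝ) (r : X → U1 × U2 → ℝ)
    (γ : ℝ) (s0 : X → ℝ) (hp : ∀ x u, IsDist (p x u))
    (pol1 : (t : ℕ) → DR1 U1 Z1 t) (pol2 : (t : ℕ) → DR2 U2 Z2 t) (ℓ : ℕ) :
    ∀ k τ, τ + k = ℓ →
    expReturnFrom p r γ s0 pol1 pol2 ℓ τ =
      ∑ w : Traj X U1 Z1 U2 Z2 τ, trajProb p s0 pol1 pol2 τ w *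
        alphaRec p r γ pol1 pol2 k τ (w.1 (Fin.last τ)) (histUpTo τ w.2 τ le_rfl) := by
  intro k
  induction k with
  | zero =>
      intro τ hτ
      have hz : ∀ w : Traj X U1 Z1 U2 Z2 ℓ,
          (∑ t : Fin ℓ, if τ ≤ t.1
            then γ ^ (t.1 - τ) * r (w.1 t.castSucc) ((w.2 t).1.1, (w.2 t).2.1) else 0) = 0 := by
        intro w
        refine Finset.sum_eq_zero fun t _ => ?_
        rw [if_neg (by have := t.isLt; omega)]
      unfold expReturnFrom
      rw [Finset.sum_congr rfl fun w _ => by rw [hz w]]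
      simp [alphaRec]
  | succ k ih =>
      intro τ hτ
      have hτℓ : τ < ℓ := by omega
      rw [expReturn_split p r γ s0 pol1 pol2 ℓ τ hτℓ]
      rw [marg_to p hp s0 pol1 pol2 τ (fun x mv => r x (mv.1.1, mv.2.1)) ℓ hτℓ]
      rw [ih (τ + 1) (by omega)]
      rw [Finset.mul_sum, ← Finset.sum_add_distrib]
      have hcomb : ∀ w : Traj X U1 Z1 U2 Z2 (τ + 1),
          trajProb p s0 pol1 pol2 (τ + 1) w *
              (fun x mv => r x (mv.1.1, mv.2.1)) (w.1 ⟨τ, by omega⟩) (w.2 ⟨τ, by omega⟩) +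
            γ * (trajProb p s0 pol1 pol2 (τ + 1) w *
              alphaRec p r γ pol1 pol2 k (τ + 1) (w.1 (Fin.last (τ + 1)))
                (histUpTo (τ + 1) w.2 (τ + 1) le_rfl)) =
          trajProb p s0 pol1 pol2 (τ + 1) w *
            (r (w.1 ⟨τ, by omega⟩) ((w.2 ⟨τ, by omega⟩).1.1, (w.2 ⟨τ, by omega⟩).2.1) +
             γ * alphaRec p r γ pol1 pol2 k (τ + 1) (w.1 (Fin.last (τ + 1)))
                (histUpTo (τ + 1) w.2 (τ + 1) le_rfl)) := by
        intro w
        ring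
      rw [Finset.sum_congr rfl fun w _ => hcomb w]
      rw [sum_traj_succ p s0 pol1 pol2 τ
        (fun w : Traj X U1 Z1 U2 Z2 (τ + 1) =>
          r (w.1 ⟨τ, by omega⟩) ((w.2 ⟨τ, by omega⟩).1.1, (w.2 ⟨τ, by omega⟩).2.1) +
          γ * alphaRec p r γ pol1 pol2 k (τ + 1) (w.1 (Fin.last (τ + 1)))
            (histUpTo (τ + 1) w.2 (τ + 1) le_rfl))]
      refine Finset.sum_congr rfl fun w _ => ?_
      have hG : ∀ q : ((U1 × Z1) × (U2 × Z2)) × X,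
          r ((extendTraj τ w q.1 q.2).1 ⟨τ, by omega⟩)
              (((extendTraj τ w q.1 q.2).2 ⟨τ, by omega⟩).1.1,
               ((extendTraj τ w q.1 q.2).2 ⟨τ, by omega⟩).2.1) +
            γ * alphaRec p r γ pol1 pol2 k (τ + 1)
              ((extendTraj τ w q.1 q.2).1 (Fin.last (τ + 1)))
              (histUpTo (τ + 1) (extendTraj τ w q.1 q.2).2 (τ + 1) le_rfl) =
          r (w.1 (Fin.last τ)) (q.1.1.1, q.1.2.1) +
            γ * alphaRec p r γ pol1 pol2 k (τ + 1) q.2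
              (Fin.snoc (histUpTo τ w.2 τ le_rfl).1 q.1.1,
               Fin.snoc (histUpTo τ w.2 τ le_rfl).2 q.1.2) := by
        intro q
        have hx : (Fin.snoc w.1 q.2 : Fin (τ + 2) → X)
            (Fin.castSucc (Fin.last τ)) = w.1 (Fin.last τ) := Fin.snoc_castSucc _ _ _
        have hm : (Fin.snoc w.2 q.1 : Fin (τ + 1) → (U1 × Z1) × (U2 × Z2))
            (Fin.last τ) = q.1 := Fin.snoc_last _ _
        have hy : (Fin.snoc w.1 q.2 : Fin (τ + 2) → X) (Fin.last (τ + 1)) = q.2 :=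
          Fin.snoc_last _ _
        show r ((Fin.snoc w.1 q.2 : Fin (τ + 2) → X) (Fin.castSucc (Fin.last τ)))
              (((Fin.snoc w.2 q.1 : Fin (τ + 1) → (U1 × Z1) × (U2 × Z2)) (Fin.last τ)).1.1,
               ((Fin.snoc w.2 q.1 : Fin (τ + 1) → (U1 × Z1) × (U2 × Z2)) (Fin.last τ)).2.1) +
            γ * alphaRec p r γ pol1 pol2 k (τ + 1)
              ((Fin.snoc w.1 q.2 : Fin (τ + 2) → X) (Fin.last (τ + 1)))
              (histUpTo (τ + 1) (Fin.snoc w.2 q.1) (τ + 1) le_rfl) = _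
        rw [hx, hm, hy, histUpTo_snoc_all]
      calc ∑ q : ((U1 × Z1) × (U2 × Z2)) × X,
            trajProb p s0 pol1 pol2 τ w *
              ((pol1 τ).1 (histUpTo τ w.2 τ le_rfl).1 q.1.1.1 *
               (pol2 τ).1 (histUpTo τ w.2 τ le_rfl).2 q.1.2.1 *
               p (w.1 (Fin.last τ)) (q.1.1.1, q.1.2.1) (q.2, (q.1.1.2, q.1.2.2))) *
              (r ((extendTraj τ w q.1 q.2).1 ⟨τ, by omega⟩)
                  (((extendTraj τ w q.1 q.2).2 ⟨τ, by omega⟩).1.1,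
                   ((extendTraj τ w q.1 q.2).2 ⟨τ, by omega⟩).2.1) +
               γ * alphaRec p r γ pol1 pol2 k (τ + 1)
                 ((extendTraj τ w q.1 q.2).1 (Fin.last (τ + 1)))
                 (histUpTo (τ + 1) (extendTraj τ w q.1 q.2).2 (τ + 1) le_rfl))
          = ∑ q : ((U1 × Z1) × (U2 × Z2)) × X,
            trajProb p s0 pol1 pol2 τ w *
              ((pol1 τ).1 (histUpTo τ w.2 τ le_rfl).1 q.1.1.1 *
               (pol2 τ).1 (histUpTo τ w.2 τ le_rfl).2 q.1.2.1 *
               p (w.1 (Fin.last τ)) (q.1.1.1, q.1.2.1) (q.2, (q.1.1.2, q.1.2.2))) *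
              (r (w.1 (Fin.last τ)) (q.1.1.1, q.1.2.1) +
               γ * alphaRec p r γ pol1 pol2 k (τ + 1) q.2
                 (Fin.snoc (histUpTo τ w.2 τ le_rfl).1 q.1.1,
                  Fin.snoc (histUpTo τ w.2 τ le_rfl).2 q.1.2)) :=
            Finset.sum_congr rfl fun q _ => by rw [hG q]
        _ = trajProb p s0 pol1 pol2 τ w *
            ∑ q : ((U1 × Z1) × (U2 × Z2)) × X,
              ((pol1 τ).1 (histUpTo τ w.2 τ le_rfl).1 q.1.1.1 *
               (pol2 τ).1 (histUpTo τ w.2 τ le_rfl).2 q.1.2.1 *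
               p (w.1 (Fin.last τ)) (q.1.1.1, q.1.2.1) (q.2, (q.1.1.2, q.1.2.2))) *
              (r (w.1 (Fin.last τ)) (q.1.1.1, q.1.2.1) +
               γ * alphaRec p r γ pol1 pol2 k (τ + 1) q.2
                 (Fin.snoc (histUpTo τ w.2 τ le_rfl).1 q.1.1,
                  Fin.snoc (histUpTo τ w.2 τ le_rfl).2 q.1.2)) := by
            rw [Finset.mul_sum]
            exact Finset.sum_congr rfl fun q _ => by ring
        _ = trajProb p s0 pol1 pol2 τ w *
              alphaRec p r γ pol1 pol2 (k + 1) τ (w.1 (Fin.last τ))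
                (histUpTo τ w.2 τ le_rfl) := by
            rw [alpha_step p r γ hp pol1 pol2 k τ (w.1 (Fin.last τ)) (histUpTo τ w.2 τ le_rfl)]

lemma occ_pair (p : X → U1 × U2 → X × (Z1 × Z2) → ℝ) (s0 : X → ℝ)
    (pol1 : (t : ℕ) → DR1 U1 Z1 t) (pol2 : (t : ℕ) → DR2 U2 Z2 t) (τ : ℕ)
    (g : X → JHist U1 Z1 U2 Z2 τ → ℝ) :
    ∑ xo : X × JHist U1 Z1 U2 Z2 τ, occInduced p s0 pol1 pol2 τ xo * g xo.1 xo.2 =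
    ∑ w : Traj X U1 Z1 U2 Z2 τ, trajProb p s0 pol1 pol2 τ w *
      g (w.1 (Fin.last τ)) (histUpTo τ w.2 τ le_rfl) := by
  unfold occInduced
  rw [Finset.sum_congr rfl fun xo _ => Finset.sum_mul Finset.univ
    (fun w : Traj X U1 Z1 U2 Z2 τ =>
      if w.1 (Fin.last τ) = xo.1 ∧ histUpTo τ w.2 τ le_rfl = xo.2
      then trajProb p s0 pol1 pol2 τ w else 0) (g xo.1 xo.2)]
  rw [Finset.sum_comm]
  refine Finset.sum_congr rfl fun w _ => ?_
  have hpt : ∀ xo : X × JHist U1 Z1 U2 Z2 τ,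
      (if w.1 (Fin.last τ) = xo.1 ∧ histUpTo τ w.2 τ le_rfl = xo.2
        then trajProb p s0 pol1 pol2 τ w else 0) * g xo.1 xo.2 =
      (if xo = (w.1 (Fin.last τ), histUpTo τ w.2 τ le_rfl)
        then trajProb p s0 pol1 pol2 τ w * g xo.1 xo.2 else 0) := by
    intro xo
    by_cases hc : w.1 (Fin.last τ) = xo.1 ∧ histUpTo τ w.2 τ le_rfl = xo.2
    · rw [if_pos hc, if_pos (Prod.ext_iff.mpr ⟨hc.1.symm, hc.2.symm⟩)]
    · rw [if_neg hc, if_neg (fun he => hc (by rw [he]; exact ⟨rfl, rfl⟩)), zero_mul]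
  rw [Finset.sum_congr rfl fun xo _ => hpt xo,
    Finset.sum_ite_eq' Finset.univ (w.1 (Fin.last τ), histUpTo τ w.2 τ le_rfl)
      (fun xo => trajProb p s0 pol1 pol2 τ w * g xo.1 xo.2),
    if_pos (Finset.mem_univ _)]

lemma trajProb_congr (p : X → U1 × U2 → X × (Z1 × Z2) → ℝ) (s0 : X → ℝ)
    (pol1 pol1' : (t : ℕ) → DR1 U1 Z1 t) (pol2 pol2' : (t : ℕ) → DR2 U2 Z2 t) (τ : ℕ)
    (h1 : ∀ t, t < τ → pol1 t = pol1' t) (h2 : ∀ t, t < τ → pol2 t = pol2' t) :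
    trajProb p s0 pol1 pol2 τ = trajProb p s0 pol1' pol2' τ := by
  funext w
  unfold trajProb
  exact congrArg (fun z => s0 (w.1 0) * z)
    (Finset.prod_congr rfl fun t _ => by rw [h1 t.1 t.isLt, h2 t.1 t.isLt])

lemma occInduced_congr (p : X → U1 × U2 → X × (Z1 × Z2) → ℝ) (s0 : X → ℝ)
    (pol1 pol1' : (t : ℕ) → DR1 U1 Z1 t) (pol2 pol2' : (t : ℕ) → DR2 U2 Z2 t) (τ : ℕ)
    (h1 : ∀ t, t < τ → pol1 t = pol1' t) (h2 : ∀ t, t < τ → pol2 t = pol2' t) :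
    occInduced p s0 pol1 pol2 τ = occInduced p s0 pol1' pol2' τ := by
  funext xo
  unfold occInduced
  rw [trajProb_congr p s0 pol1 pol1' pol2 pol2' τ h1 h2]

lemma alphaRec_congr (p : X → U1 × U2 → X × (Z1 × Z2) → ℝ) (r : X → U1 × U2 → ℝ) (γ : ℝ)
    (pol1 pol1' : (t : ℕ) → DR1 U1 Z1 t) (pol2 pol2' : (t : ℕ) → DR2 U2 Z2 t) :
    ∀ k τ, (∀ t, τ ≤ t → pol1 t = pol1' t) → (∀ t, τ ≤ t → pol2 t = pol2' t) →
    alphaRec p r γ pol1 pol2 k τ = alphaRec p r γ pol1' pol2' k τ := by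
  intro k
  induction k with
  | zero => intro τ _ _; rfl
  | succ k ih =>
      intro τ h1 h2
      funext x o
      simp only [alphaRec]
      refine Finset.sum_congr rfl fun u _ => ?_
      rw [h1 τ le_rfl, h2 τ le_rfl,
        ih (τ + 1) (fun t ht => h1 t (by omega)) (fun t ht => h2 t (by omega))]

lemma bullet1 (p : X → U1 × U2 → X × (Z1 × Z2) → ℝ) (r : X → U1 × U2 → ℝ)
    (s0 : X → ℝ) (γ : ℝ) (ℓ : ℕ) (hp : ∀ x u, IsDist (p x u))
    (τ : ℕ) (hτ : τ ≤ ℓ)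
    (pre1 : (t : ℕ) → DR1 U1 Z1 t) (pre2 : (t : ℕ) → DR2 U2 Z2 t)
    (cont1 : (t : ℕ) → DR1 U1 Z1 t) (cont2 : (t : ℕ) → DR2 U2 Z2 t) :
    expReturnFrom p r γ s0 (fun t => if t < τ then pre1 t else cont1 t)
        (fun t => if t < τ then pre2 t else cont2 t) ℓ τ =
      ∑ xo : X × JHist U1 Z1 U2 Z2 τ,
        occInduced p s0 pre1 pre2 τ xo *
          alphaRec p r γ cont1 cont2 (ℓ - τ) τ xo.1 xo.2 := by
  set sp1 : (t : ℕ) → DR1 U1 Z1 t := fun t => if t < τ then pre1 t else cont1 t with hsp1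
  set sp2 : (t : ℕ) → DR2 U2 Z2 t := fun t => if t < τ then pre2 t else cont2 t with hsp2
  rw [main_claim p r γ s0 hp sp1 sp2 ℓ (ℓ - τ) τ (by omega)]
  rw [alphaRec_congr p r γ sp1 cont1 sp2 cont2 (ℓ - τ) τ
    (fun t ht => by simp [hsp1, Nat.not_lt_of_le ht])
    (fun t ht => by simp [hsp2, Nat.not_lt_of_le ht])]
  rw [← occ_pair p s0 sp1 sp2 τ
    (fun x o => alphaRec p r γ cont1 cont2 (ℓ - τ) τ x o)]
  rw [occInduced_congr p s0 sp1 pre1 sp2 pre2 τ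
    (fun t ht => by simp [hsp1, ht]) (fun t ht => by simp [hsp2, ht])]


/-- the occupancy state is a sufficient statistic for policy
evaluation: for any prefix `(a_0, …, a_{τ-1})` inducing occupancy state `s_τ` and any
continuation joint policy `a_{τ:}`, the expected discounted return from stage `τ` equals
`Σ_{x,o} s_τ(x,o) α^{a_{τ:}}_τ(x,o)`; consequently, two prefixes inducing the same
occupancy state yield the same expected continuation return under every continuation
joint policy. -/
theorem stmt8
    [Nonempty X] [Nonempty U1] [Nonempty U2] [Nonempty Z1] [Nonempty Z2]
    (p : X → U1 × U2 → X × (Z1 × Z2) → ℝ) (r : X → U1 × U2 → ℝ)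
    (s0 : X → ℝ) (γ : ℝ) (ℓ : ℕ)
    (hp : ∀ x u, IsDist (p x u)) (hs0 : IsDist s0) (hγ0 : 0 ≤ γ) (hγ1 : γ < 1)
    (τ : ℕ) (hτ : τ ≤ ℓ)
    (pre1 : (t : ℕ) → DR1 U1 Z1 t) (pre2 : (t : ℕ) → DR2 U2 Z2 t) :
    (∀ (cont1 : (t : ℕ) → DR1 U1 Z1 t) (cont2 : (t : ℕ) → DR2 U2 Z2 t),
        expReturnFrom p r γ s0 (fun t => if t < τ then pre1 t else cont1 t)
            (fun t => if t < τ then pre2 t else cont2 t) ℓ τ =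
          ∑ xo : X × JHist U1 Z1 U2 Z2 τ,
            occInduced p s0 pre1 pre2 τ xo *
              alphaRec p r γ cont1 cont2 (ℓ - τ) τ xo.1 xo.2) ∧
      ∀ (pre1' : (t : ℕ) → DR1 U1 Z1 t) (pre2' : (t : ℕ) → DR2 U2 Z2 t),
        occInduced p s0 pre1 pre2 τ = occInduced p s0 pre1' pre2' τ →
        ∀ (cont1 : (t : ℕ) → DR1 U1 Z1 t) (cont2 : (t : ℕ) → DR2 U2 Z2 t),
          expReturnFrom p r γ s0 (fun t => if t < τ then pre1 t else cont1 t)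
              (fun t => if t < τ then pre2 t else cont2 t) ℓ τ =
            expReturnFrom p r γ s0 (fun t => if t < τ then pre1' t else cont1 t)
              (fun t => if t < τ then pre2' t else cont2 t) ℓ τ := by
  constructor
  · intro cont1 cont2
    exact bullet1 p r s0 γ ℓ hp τ hτ pre1 pre2 cont1 cont2
  · intro pre1' pre2' hocc cont1 cont2
    rw [bullet1 p r s0 γ ℓ hp τ hτ pre1 pre2 cont1 cont2,
      bullet1 p r s0 γ ℓ hp τ hτ pre1' pre2' cont1 cont2, hocc]


end ZSPOSG
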